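/- arXiv:1401.6400 — 4 statements merged into one kernel-verified Lean document; each statement's English description precedes it below -/
import Mathlib

section
/- Let Q^A ∈ ℝ^{r×r} and Q^B ∈ ℝ^{s×s} be transition rate matrices of irreducible continuous-time Markov chains (off-diagonals nonnegative, rows summing to zero) with stationary distributions π^A and π^B (strictly positive probability row vectors with π^A Q^A = 0 and π^B Q^B = 0), where state r of chain A is identified with state 1 of chain B. Let Q ∈ ℝ^{(r+s-1)×(r+s-1)} be the glued rate matrix given by Q_{ij} = Q^A_{ij} 1(i,j ≤ r) + Q^B_{i-r+1, j-r+1} 1(i,j ≥ r) (indices shifted so the shared state is index r). Define π by π_i = C π^A_i π^B_1 for i < r, π_r = C π^A_r π^B_1, and π_{r+j-1} = C π^A_r π^B_j for j ≥ 2, with C = (π^A_r + π^B_1 - π^A_r π^B_1)^{-1}. Then π^T Q = 0. -/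
open Matrix

/-- The rate matrix obtained by gluing chain A (states `0,…,r`, shared state `r`)
and chain B (states `0,…,s`, shared state `0`) at one state: glued state space
`Fin (r+1+s)` where index `r` is the shared state.  Transition rates of both
chains are kept; at the shared state the (diagonal) entries add. -/
noncomputable def gluedOneQ (r s : ℕ)
    (QA : Matrix (Fin (r + 1)) (Fin (r + 1)) ℝ)
    (QB : Matrix (Fin (s + 1)) (Fin (s + 1)) ℝ) :
    Matrix (Fin (r + 1 + s)) (Fin (r + 1 + s)) ℝ := fun i j =>
  (if h : i.1 ≤ r ∧ j.1 ≤ r then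
      QA ⟨i.1, by omega⟩ ⟨j.1, by omega⟩ else 0) +
  (if h : r ≤ i.1 ∧ r ≤ j.1 then
      QB ⟨i.1 - r, by have := i.isLt; omega⟩ ⟨j.1 - r, by have := j.isLt; omega⟩ else 0)

/-- The proposed stationary distribution of the chain glued at one state:
`π_i = C π^A_i π^B_1` for states of A, `π_r = C π^A_r π^B_1` at the shared state,
and `π_{r+j} = C π^A_r π^B_j` for the non-shared states of B, where
`C = (π^A_r + π^B_1 − π^A_r π^B_1)⁻¹`. -/
noncomputable def gluedOnePi (r s : ℕ)
    (piA : Fin (r + 1) → ℝ) (piB : Fin (s + 1) → ℝ) :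
    Fin (r + 1 + s) → ℝ := fun i =>
  if h : i.1 < r then
    (piA (Fin.last r) + piB 0 - piA (Fin.last r) * piB 0)⁻¹ * piA ⟨i.1, by omega⟩ * piB 0
  else
    (piA (Fin.last r) + piB 0 - piA (Fin.last r) * piB 0)⁻¹ * piA (Fin.last r) *
      piB ⟨i.1 - r, by have := i.isLt; omega⟩

/-- Gluing two irreducible continuous-time Markov chains at a single state:
the vector `π` given by `gluedOnePi` satisfies `πᵀ Q = 0` for the glued rate
matrix `Q = gluedOneQ`. -/
theorem stmt_4 (r s : ℕ)
    (QA : Matrix (Fin (r + 1)) (Fin (r + 1)) ℝ)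
    (QB : Matrix (Fin (s + 1)) (Fin (s + 1)) ℝ)
    (hAoff : ∀ i j, i ≠ j → 0 ≤ QA i j) (hBoff : ∀ i j, i ≠ j → 0 ≤ QB i j)
    (hArow : ∀ i, ∑ j, QA i j = 0) (hBrow : ∀ i, ∑ j, QB i j = 0)
    (hAirr : ∀ i j : Fin (r + 1), i ≠ j →
      Relation.TransGen (fun a b => 0 < QA a b) i j)
    (hBirr : ∀ i j : Fin (s + 1), i ≠ j →
      Relation.TransGen (fun a b => 0 < QB a b) i j)
    (piA : Fin (r + 1) → ℝ) (piB : Fin (s + 1) → ℝ)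
    (hApos : ∀ i, 0 < piA i) (hBpos : ∀ j, 0 < piB j)
    (hAsum : ∑ i, piA i = 1) (hBsum : ∑ j, piB j = 1)
    (hAstat : ∀ j, ∑ i, piA i * QA i j = 0)
    (hBstat : ∀ j, ∑ i, piB i * QB i j = 0) :
    ∀ j, ∑ i, gluedOnePi r s piA piB i * gluedOneQ r s QA QB i j = 0 := by
  intro j
  set C := (piA (Fin.last r) + piB 0 - piA (Fin.last r) * piB 0)⁻¹ with hC
  have hpi_cast : ∀ a : Fin (r + 1),
      gluedOnePi r s piA piB (Fin.castAdd s a) = C * piA a * piB 0 := by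
    intro a
    simp only [gluedOnePi, Fin.coe_castAdd, ← hC]
    split_ifs with h
    · congr 2
    · have ha : a = Fin.last r := Fin.ext (by have := a.isLt; simp [Fin.last]; omega)
      have h0 : (⟨(a : ℕ) - r, by have := a.isLt; omega⟩ : Fin (s + 1)) = 0 :=
        Fin.ext (by simp; omega)
      rw [h0, ha]
  have hpi_nat : ∀ b : Fin s,
      gluedOnePi r s piA piB (Fin.natAdd (r + 1) b) =
        C * piA (Fin.last r) * piB ⟨b.1 + 1, by omega⟩ := by
    intro b
    simp only [gluedOnePi, Fin.coe_natAdd, ← hC]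
    rw [dif_neg (by omega)]
    congr 1
    exact congrArg piB (Fin.ext (by simp; omega))
  rw [Fin.sum_univ_add]
  simp only [hpi_cast, hpi_nat, gluedOneQ, Fin.coe_castAdd, Fin.coe_natAdd]
  by_cases hj : (j : ℕ) < r
  · -- column strictly inside A
    have hQcast : ∀ a : Fin (r + 1),
        (if h : (a : ℕ) ≤ r ∧ (j : ℕ) ≤ r then
            QA ⟨a.1, by omega⟩ ⟨j.1, by omega⟩ else 0) +
        (if h : r ≤ (a : ℕ) ∧ r ≤ (j : ℕ) then
            QB ⟨a.1 - r, by have := a.isLt; omega⟩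
              ⟨j.1 - r, by have := j.isLt; omega⟩ else 0) =
          QA a ⟨j.1, by omega⟩ := by
      intro a
      rw [dif_pos ⟨by omega, by omega⟩, dif_neg (by omega), add_zero]
    have hQnat : ∀ b : Fin s,
        (if h : r + 1 + (b : ℕ) ≤ r ∧ (j : ℕ) ≤ r then
            QA ⟨r + 1 + b.1, by omega⟩ ⟨j.1, by omega⟩ else 0) +
        (if h : r ≤ r + 1 + (b : ℕ) ∧ r ≤ (j : ℕ) then
            QB ⟨r + 1 + b.1 - r, by have := b.isLt; omega⟩
              ⟨j.1 - r, by have := j.isLt; omega⟩ else 0) = 0 := by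
      intro b
      rw [dif_neg (by omega), dif_neg (by omega), add_zero]
    simp only [hQcast, hQnat, mul_zero, Finset.sum_const_zero, add_zero]
    have := hAstat ⟨j.1, by omega⟩
    calc ∑ a : Fin (r + 1), C * piA a * piB 0 * QA a ⟨j.1, by omega⟩
        = C * piB 0 * ∑ a : Fin (r + 1), piA a * QA a ⟨j.1, by omega⟩ := by
          rw [Finset.mul_sum]; congr 1; ext a; ring
      _ = 0 := by rw [this, mul_zero]
  · by_cases hj' : (j : ℕ) = r
    · -- shared column
      have hQcast : ∀ a : Fin (r + 1),
          (if h : (a : ℕ) ≤ r ∧ (j : ℕ) ≤ r then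
              QA ⟨a.1, by omega⟩ ⟨j.1, by omega⟩ else 0) =
            QA a (Fin.last r) := by
        intro a
        rw [dif_pos ⟨by omega, by omega⟩]
        congr 1 <;> exact Fin.ext (by simp [Fin.last]; omega)
      have hQcast2 : ∀ a : Fin (r + 1),
          (if h : r ≤ (a : ℕ) ∧ r ≤ (j : ℕ) then
              QB ⟨a.1 - r, by have := a.isLt; omega⟩
                ⟨j.1 - r, by have := j.isLt; omega⟩ else 0) =
            if (a : ℕ) = r then QB 0 0 else 0 := by
        intro a
        by_cases ha : (a : ℕ) = r
        · rw [dif_pos ⟨by omega, by omega⟩, if_pos ha]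
          congr 1 <;> exact Fin.ext (by simp; omega)
        · rw [dif_neg (by have := a.isLt; omega), if_neg ha]
      have hQnat : ∀ b : Fin s,
          (if h : r + 1 + (b : ℕ) ≤ r ∧ (j : ℕ) ≤ r then
              QA ⟨r + 1 + b.1, by omega⟩ ⟨j.1, by omega⟩ else 0) +
          (if h : r ≤ r + 1 + (b : ℕ) ∧ r ≤ (j : ℕ) then
              QB ⟨r + 1 + b.1 - r, by have := b.isLt; omega⟩
                ⟨j.1 - r, by have := j.isLt; omega⟩ else 0) =
            QB ⟨b.1 + 1, by omega⟩ 0 := by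
        intro b
        rw [dif_neg (by omega), dif_pos ⟨by omega, by omega⟩, zero_add]
        congr 1 <;> exact Fin.ext (by simp; omega)
      simp only [hQnat]
      have split : ∀ a : Fin (r + 1),
          C * piA a * piB 0 *
            ((if h : (a : ℕ) ≤ r ∧ (j : ℕ) ≤ r then
                QA ⟨a.1, by omega⟩ ⟨j.1, by omega⟩ else 0) +
             (if h : r ≤ (a : ℕ) ∧ r ≤ (j : ℕ) then
                QB ⟨a.1 - r, by have := a.isLt; omega⟩
                  ⟨j.1 - r, by have := j.isLt; omega⟩ else 0)) =
          C * piB 0 * (piA a * QA a (Fin.last r)) +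
            (if (a : ℕ) = r then C * piA (Fin.last r) * piB 0 * QB 0 0 else 0) := by
        intro a
        rw [hQcast, hQcast2]
        by_cases ha : (a : ℕ) = r
        · have : a = Fin.last r := Fin.ext (by simp [Fin.last, ha])
          rw [if_pos ha, if_pos ha, this]; ring
        · rw [if_neg ha, if_neg ha]; ring
      simp only [split]
      have hiff : ∀ x : Fin (r + 1), ((x : ℕ) = r) ↔ (x = Fin.last r) :=
        fun x => ⟨fun h => Fin.ext (by simp [Fin.last, h]), fun h => by
          rw [h]; simp [Fin.last]⟩
      rw [Finset.sum_add_distrib, ← Finset.mul_sum, hAstat (Fin.last r), mul_zero,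
        zero_add]
      simp only [hiff, Finset.sum_ite_eq' Finset.univ (Fin.last r), Finset.mem_univ,
        if_true]
      have hB0 := hBstat 0
      rw [Fin.sum_univ_succ] at hB0
      have hsucc : ∀ b : Fin s, (⟨(b : ℕ) + 1, by omega⟩ : Fin (s + 1)) = b.succ :=
        fun b => Fin.ext (by simp)
      simp only [hsucc]
      have hS : (∑ x : Fin s, C * piA (Fin.last r) * piB x.succ * QB x.succ 0) =
          C * piA (Fin.last r) * ∑ i : Fin s, piB i.succ * QB i.succ 0 := by
        rw [Finset.mul_sum]
        exact Finset.sum_congr rfl fun b _ => by ring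
      rw [hS]
      linear_combination (C * piA (Fin.last r)) * hB0
    · -- column strictly inside B
      have hQcast : ∀ a : Fin (r + 1),
          (if h : (a : ℕ) ≤ r ∧ (j : ℕ) ≤ r then
              QA ⟨a.1, by omega⟩ ⟨j.1, by omega⟩ else 0) +
          (if h : r ≤ (a : ℕ) ∧ r ≤ (j : ℕ) then
              QB ⟨a.1 - r, by have := a.isLt; omega⟩
                ⟨j.1 - r, by have := j.isLt; omega⟩ else 0) =
            if (a : ℕ) = r then QB 0 ⟨j.1 - r, by have := j.isLt; omega⟩ else 0 := by
        intro a
        by_cases ha : (a : ℕ) = r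
        · rw [dif_neg (by omega), dif_pos ⟨by omega, by omega⟩, zero_add, if_pos ha]
          congr 1
          exact Fin.ext (by simp; omega)
        · rw [dif_neg (by omega), dif_neg (by have := a.isLt; omega), if_neg ha]
          ring
      have hQnat : ∀ b : Fin s,
          (if h : r + 1 + (b : ℕ) ≤ r ∧ (j : ℕ) ≤ r then
              QA ⟨r + 1 + b.1, by omega⟩ ⟨j.1, by omega⟩ else 0) +
          (if h : r ≤ r + 1 + (b : ℕ) ∧ r ≤ (j : ℕ) then
              QB ⟨r + 1 + b.1 - r, by have := b.isLt; omega⟩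
                ⟨j.1 - r, by have := j.isLt; omega⟩ else 0) =
            QB ⟨b.1 + 1, by omega⟩ ⟨j.1 - r, by have := j.isLt; omega⟩ := by
        intro b
        rw [dif_neg (by omega), dif_pos ⟨by omega, by omega⟩, zero_add]
        congr 1
        exact Fin.ext (by simp; omega)
      have hiff : ∀ x : Fin (r + 1), ((x : ℕ) = r) ↔ (x = Fin.last r) :=
        fun x => ⟨fun h => Fin.ext (by simp [Fin.last, h]), fun h => by
          rw [h]; simp [Fin.last]⟩
      simp only [hQcast, hQnat, mul_ite, mul_zero, hiff,
        Finset.sum_ite_eq' Finset.univ (Fin.last r), Finset.mem_univ, if_true]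
      have hB0 := hBstat ⟨j.1 - r, by have := j.isLt; omega⟩
      rw [Fin.sum_univ_succ] at hB0
      have hsucc : ∀ b : Fin s, (⟨(b : ℕ) + 1, by omega⟩ : Fin (s + 1)) = b.succ :=
        fun b => Fin.ext (by simp)
      simp only [hsucc]
      have hS : (∑ x : Fin s, C * piA (Fin.last r) * piB x.succ *
            QB x.succ ⟨j.1 - r, by have := j.isLt; omega⟩) =
          C * piA (Fin.last r) * ∑ i : Fin s, piB i.succ *
            QB i.succ ⟨j.1 - r, by have := j.isLt; omega⟩ := by
        rw [Finset.mul_sum]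
        exact Finset.sum_congr rfl fun b _ => by ring
      rw [hS]
      linear_combination (C * piA (Fin.last r)) * hB0
end

section
/- Under Condition (A), i.e., π^A_1/π^A_2 = π^B_1/π^B_2, the vector π defined by π_i = C π^A_i π^B_1 for i in S^A, π_1 = C π^A_1 π^B_1, π_2 = C π^A_2 π^B_1, π_j = C π^A_1 π^B_j for j in S^B, with C = (π^A_1 + π^B_1 − π^A_1(π^B_1+π^B_2))^{-1}, satisfies π^T Q = 0, where Q is the transition rate matrix of the chain obtained by gluing chains A and B at two states 1 and 2. -/
/-- The rate matrix of the chain obtained by gluing chain A (state space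
`Fin m ⊕ Fin 2`, the `Fin 2` part being the shared states 1 and 2) and chain B
(state space `Fin 2 ⊕ Fin n`) at the two shared states:
`Q_{ij} = Q^A_{ij} 1(i,j ∈ V^A) + Q^B_{ij} 1(i,j ∈ V^B)`. -/
def glueTwoQ {m n : ℕ}
    (QA : Matrix (Fin m ⊕ Fin 2) (Fin m ⊕ Fin 2) ℝ)
    (QB : Matrix (Fin 2 ⊕ Fin n) (Fin 2 ⊕ Fin n) ℝ) :
    Matrix (Fin m ⊕ (Fin 2 ⊕ Fin n)) (Fin m ⊕ (Fin 2 ⊕ Fin n)) ℝ := fun i j =>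
  match i, j with
  | .inl i, .inl i' => QA (.inl i) (.inl i')
  | .inl i, .inr (.inl k') => QA (.inl i) (.inr k')
  | .inl _, .inr (.inr _) => 0
  | .inr (.inl k), .inl i' => QA (.inr k) (.inl i')
  | .inr (.inl k), .inr (.inl k') => QA (.inr k) (.inr k') + QB (.inl k) (.inl k')
  | .inr (.inl k), .inr (.inr j') => QB (.inl k) (.inr j')
  | .inr (.inr _), .inl _ => 0
  | .inr (.inr j), .inr (.inl k') => QB (.inr j) (.inl k')
  | .inr (.inr j), .inr (.inr j') => QB (.inr j) (.inr j')

/-- The vector `π` of Theorem 5.1 (parallel case): `π_i = C π^A_i π^B_1` on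
`S^A ∪ {1,2}` and `π_j = C π^A_1 π^B_j` on `S^B`, with
`C = (π^A_1 + π^B_1 − π^A_1(π^B_1 + π^B_2))⁻¹`. -/
noncomputable def glueTwoPi {m n : ℕ}
    (piA : Fin m ⊕ Fin 2 → ℝ) (piB : Fin 2 ⊕ Fin n → ℝ) :
    Fin m ⊕ (Fin 2 ⊕ Fin n) → ℝ := fun i =>
  match i with
  | .inl i => (piA (.inr 0) + piB (.inl 0) -
      piA (.inr 0) * (piB (.inl 0) + piB (.inl 1)))⁻¹ * piA (.inl i) * piB (.inl 0)
  | .inr (.inl k) => (piA (.inr 0) + piB (.inl 0) -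
      piA (.inr 0) * (piB (.inl 0) + piB (.inl 1)))⁻¹ * piA (.inr k) * piB (.inl 0)
  | .inr (.inr j) => (piA (.inr 0) + piB (.inl 0) -
      piA (.inr 0) * (piB (.inl 0) + piB (.inl 1)))⁻¹ * piA (.inr 0) * piB (.inr j)

/-- Under Condition (A), `π^A_1/π^A_2 = π^B_1/π^B_2`, the glued vector `π`
satisfies `πᵀ Q = 0` for the rate matrix `Q` of the chain obtained by gluing
chains A and B at the two states 1 and 2. -/
theorem stmt_5 {m n : ℕ}
    (QA : Matrix (Fin m ⊕ Fin 2) (Fin m ⊕ Fin 2) ℝ)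
    (QB : Matrix (Fin 2 ⊕ Fin n) (Fin 2 ⊕ Fin n) ℝ)
    (hAoff : ∀ i j, i ≠ j → 0 ≤ QA i j) (hBoff : ∀ i j, i ≠ j → 0 ≤ QB i j)
    (hArow : ∀ i, ∑ j, QA i j = 0) (hBrow : ∀ i, ∑ j, QB i j = 0)
    (hAirr : ∀ i j, i ≠ j → Relation.TransGen (fun a b => 0 < QA a b) i j)
    (hBirr : ∀ i j, i ≠ j → Relation.TransGen (fun a b => 0 < QB a b) i j)
    (piA : Fin m ⊕ Fin 2 → ℝ) (piB : Fin 2 ⊕ Fin n → ℝ)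
    (hApos : ∀ i, 0 < piA i) (hBpos : ∀ j, 0 < piB j)
    (hAsum : ∑ i, piA i = 1) (hBsum : ∑ j, piB j = 1)
    (hAstat : ∀ j, ∑ i, piA i * QA i j = 0)
    (hBstat : ∀ j, ∑ i, piB i * QB i j = 0)
    (hcondA : piA (.inr 0) * piB (.inl 1) = piA (.inr 1) * piB (.inl 0)) :
    ∀ j, ∑ i, glueTwoPi piA piB i * glueTwoQ QA QB i j = 0 := by

  intro j
  have key : ∀ (x : Fin 2 ⊕ Fin n),
      piA (.inr 0) * piB (.inl 0) * QB (.inl 0) x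
        + piA (.inr 1) * piB (.inl 0) * QB (.inl 1) x
        + piA (.inr 0) * ∑ jj, piB (.inr jj) * QB (.inr jj) x = 0 := by
    intro x
    have h := hBstat x
    rw [Fintype.sum_sum_type, Fin.sum_univ_two] at h
    linear_combination piA (.inr 0) * h - QB (.inl 1) x * hcondA
  have pull2 : ∀ {ι : Type} [Fintype ι] (a b : ℝ) (f g : ι → ℝ),
      ∑ i, a * f i * b * g i = a * b * ∑ i, f i * g i := by
    intro ι _ a b f g
    rw [Finset.mul_sum]
    exact Finset.sum_congr rfl (fun i _ => by ring)
  have pull3 : ∀ {ι : Type} [Fintype ι] (a b : ℝ) (f g : ι → ℝ),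
      ∑ i, a * b * f i * g i = a * b * ∑ i, f i * g i := by
    intro ι _ a b f g
    rw [Finset.mul_sum]
    exact Finset.sum_congr rfl (fun i _ => by ring)
  rcases j with i' | k' | j'
  · have h := hAstat (.inl i')
    rw [Fintype.sum_sum_type] at h
    simp only [glueTwoPi, glueTwoQ, Fintype.sum_sum_type, mul_zero, Finset.sum_const_zero,
      add_zero]
    rw [pull2, pull2]
    linear_combination ((piA (.inr 0) + piB (.inl 0) -
      piA (.inr 0) * (piB (.inl 0) + piB (.inl 1)))⁻¹ * piB (.inl 0)) * h
  · have h := hAstat (.inr k')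
    rw [Fintype.sum_sum_type, Fin.sum_univ_two] at h
    have hk := key (.inl k')
    simp only [glueTwoPi, glueTwoQ, Fintype.sum_sum_type, Fin.sum_univ_two]
    rw [pull2, pull3]
    linear_combination ((piA (.inr 0) + piB (.inl 0) -
        piA (.inr 0) * (piB (.inl 0) + piB (.inl 1)))⁻¹ * piB (.inl 0)) * h +
      (piA (.inr 0) + piB (.inl 0) -
        piA (.inr 0) * (piB (.inl 0) + piB (.inl 1)))⁻¹ * hk
  · have hk := key (.inr j')
    simp only [glueTwoPi, glueTwoQ, Fintype.sum_sum_type, Fin.sum_univ_two, mul_zero,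
      Finset.sum_const_zero, zero_add]
    rw [pull3]
    linear_combination (piA (.inr 0) + piB (.inl 0) -
        piA (.inr 0) * (piB (.inl 0) + piB (.inl 1)))⁻¹ * hk
end

section
/- Under Condition (A) (π^A_1 π^B_2 = π^A_2 π^B_1), the entries of the vector π given by π_i = C π^A_i π^B_1 on S^A ∪ {1,2} and π_j = C π^A_1 π^B_j on S^B, with C = (π^A_1 + π^B_1 − π^A_1(π^B_1+π^B_2))^{-1}, are strictly positive and sum to 1. -/
/-- Under Condition (A) (`π^A_1 π^B_2 = π^A_2 π^B_1`), the entries of the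
glued vector `π` are strictly positive and sum to 1. -/
theorem stmt_6 {m n : ℕ}
    (piA : Fin m ⊕ Fin 2 → ℝ) (piB : Fin 2 ⊕ Fin n → ℝ)
    (hApos : ∀ i, 0 < piA i) (hBpos : ∀ j, 0 < piB j)
    (hAsum : ∑ i, piA i = 1) (hBsum : ∑ j, piB j = 1)
    (hcondA : piA (.inr 0) * piB (.inl 1) = piA (.inr 1) * piB (.inl 0)) :
    (∀ i, 0 < glueTwoPi piA piB i) ∧ ∑ i, glueTwoPi piA piB i = 1 := by
  have hSA : 0 ≤ ∑ i : Fin m, piA (.inl i) := Finset.sum_nonneg fun i _ => (hApos _).le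
  have hSB : 0 ≤ ∑ j : Fin n, piB (.inr j) := Finset.sum_nonneg fun j _ => (hBpos _).le
  have hAsplit : (∑ i : Fin m, piA (.inl i)) + (piA (.inr 0) + piA (.inr 1)) = 1 := by
    rw [← hAsum, Fintype.sum_sum_type, Fin.sum_univ_two]
  have hBsplit : (piB (.inl 0) + piB (.inl 1)) + (∑ j : Fin n, piB (.inr j)) = 1 := by
    rw [← hBsum, Fintype.sum_sum_type, Fin.sum_univ_two]
  have hD : 0 < piA (.inr 0) + piB (.inl 0) -
      piA (.inr 0) * (piB (.inl 0) + piB (.inl 1)) := by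
    have h1 : piB (.inl 0) + piB (.inl 1) ≤ 1 := by linarith
    have h2 := mul_le_of_le_one_right (hApos (.inr 0)).le h1
    linarith [hBpos (.inl 0)]
  refine ⟨?_, ?_⟩
  · rintro (i | k | j) <;>
      exact mul_pos (mul_pos (inv_pos.mpr hD) (hApos _)) (hBpos _)
  · rw [Fintype.sum_sum_type, Fintype.sum_sum_type, Fin.sum_univ_two]
    simp only [glueTwoPi]
    rw [show (∑ i : Fin m, (piA (.inr 0) + piB (.inl 0) -
        piA (.inr 0) * (piB (.inl 0) + piB (.inl 1)))⁻¹ * piA (.inl i) * piB (.inl 0)) =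
        (piA (.inr 0) + piB (.inl 0) -
        piA (.inr 0) * (piB (.inl 0) + piB (.inl 1)))⁻¹ *
        (∑ i : Fin m, piA (.inl i)) * piB (.inl 0) by
      rw [Finset.mul_sum, Finset.sum_mul],
      show (∑ j : Fin n, (piA (.inr 0) + piB (.inl 0) -
        piA (.inr 0) * (piB (.inl 0) + piB (.inl 1)))⁻¹ * piA (.inr 0) * piB (.inr j)) =
        (piA (.inr 0) + piB (.inl 0) -
        piA (.inr 0) * (piB (.inl 0) + piB (.inl 1)))⁻¹ * piA (.inr 0) *
        (∑ j : Fin n, piB (.inr j)) from (Finset.mul_sum _ _ _).symm]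
    field_simp
    linear_combination piB (.inl 0) * hAsplit + piA (.inr 0) * hBsplit
end

section
/- Let Q ∈ ℝ^{s×s} be a matrix with nonnegative off-diagonal entries, nonpositive diagonal entries, and rows summing to zero, which is irreducible (the associated directed graph on {1,…,s} with edges (i,j) whenever i≠j and Q_{ij} > 0 is strongly connected), and assume s ≥ 2. Let Q₀ be the matrix obtained from Q by replacing columns 1 and 2 with zeros except that the diagonal entries Q₀_{11} = Q_{11} and Q₀_{22} = Q_{22} are kept. Then Q₀ is invertible. -/
/-- Proposition: `Q₀` has full rank.  `Q` is the transition rate matrix of an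
irreducible continuous-time Markov chain on `s + 2 ≥ 2` states (states 1 and 2
are the indices `0` and `1`); `Q₀` is obtained from `Q` by zeroing out columns
`0` and `1` except for the diagonal entries `Q 0 0` and `Q 1 1`.  Then `Q₀` is
invertible. -/
theorem stmt_9 (s : ℕ) (Q : Matrix (Fin (s + 2)) (Fin (s + 2)) ℝ)
    (hoff : ∀ i j, i ≠ j → 0 ≤ Q i j) (hdiag : ∀ i, Q i i ≤ 0)
    (hrow : ∀ i, ∑ j, Q i j = 0)
    (hirr : ∀ i j, i ≠ j → Relation.TransGen (fun a b => a ≠ b ∧ 0 < Q a b) i j) :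
    IsUnit (Matrix.of (fun i j : Fin (s + 2) =>
      if j = 0 ∨ j = 1 then (if i = j then Q i j else 0) else Q i j)) := by
  set A : Matrix (Fin (s+2)) (Fin (s+2)) ℝ := Matrix.of (fun i j : Fin (s + 2) =>
      if j = 0 ∨ j = 1 then (if i = j then Q i j else 0) else Q i j) with hA
  rw [Matrix.isUnit_iff_isUnit_det, isUnit_iff_ne_zero]
  intro hdet
  obtain ⟨v, hv0, hv⟩ := (Matrix.exists_mulVec_eq_zero_iff).2 hdet
  obtain ⟨i0, -, hi0⟩ := Finset.exists_max_image Finset.univ (fun j => |v j|)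
    ⟨0, Finset.mem_univ 0⟩
  set M := |v i0| with hM
  have hMpos : 0 < M := by
    obtain ⟨k, hk⟩ := Function.ne_iff.1 hv0
    exact lt_of_lt_of_le (abs_pos.2 hk) (hi0 k (Finset.mem_univ k))
  set y : Fin (s+2) → ℝ := if 0 ≤ v i0 then v else -v with hy
  have hyle : ∀ j, y j ≤ M := by
    intro j
    have h1 : |v j| ≤ M := hi0 j (Finset.mem_univ j)
    by_cases h : 0 ≤ v i0
    · simp only [hy, if_pos h]; exact (le_abs_self _).trans h1
    · simp only [hy, if_neg h, Pi.neg_apply]; exact (neg_le_abs _).trans h1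
  have hyi0 : y i0 = M := by
    by_cases h : 0 ≤ v i0
    · simp only [hy, if_pos h, hM]; exact (abs_of_nonneg h).symm
    · simp only [hy, if_neg h, Pi.neg_apply, hM]
      exact (abs_of_neg (lt_of_not_ge h)).symm
  have hAy : A.mulVec y = 0 := by
    by_cases h : 0 ≤ v i0
    · simp only [hy, if_pos h]; exact hv
    · simp only [hy, if_neg h, Matrix.mulVec_neg, hv, neg_zero]
  have key : ∀ i, y i = M → ∀ j, i ≠ j → 0 < Q i j → (y j = M ∧ j ≠ 0 ∧ j ≠ 1) := by
    intro i hyi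
    have hrowi : ∑ j, A i j * y j = 0 := by
      have := congrFun hAy i
      simpa [Matrix.mulVec, dotProduct] using this
    have hq : ∀ j, 0 ≤ Q i j - A i j := by
      intro j
      by_cases h1 : j = 0 ∨ j = 1
      · by_cases h2 : i = j
        · simp [hA, h1, h2]
        · simpa [hA, h1, h2] using hoff i j h2
      · simp [hA, h1]
    have hAij_eq : ∀ j, (j = 0 ∨ j = 1) → i ≠ j → A i j = 0 := by
      intro j h1 h2; simp [hA, h1, h2]
    have hDsum : ∑ j, A i j = -(∑ j, (Q i j - A i j)) := by
      rw [Finset.sum_sub_distrib, hrow i]; ring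
    have hT : ∑ j, A i j ≤ 0 := by
      rw [hDsum]
      simpa using Finset.sum_nonneg (fun j _ => hq j)
    have hS : ∑ j, A i j * (y j - M) = -(M * ∑ j, A i j) := by
      have : ∑ j, A i j * (y j - M) = (∑ j, A i j * y j) - M * ∑ j, A i j := by
        rw [Finset.mul_sum, ← Finset.sum_sub_distrib]
        apply Finset.sum_congr rfl
        intro j _; ring
      rw [this, hrowi]; ring
    have htermle : ∀ j, A i j * (y j - M) ≤ 0 := by
      intro j
      by_cases h : i = j
      · subst h; rw [hyi]; simp
      · have h1 : 0 ≤ A i j := by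
          by_cases h2 : j = 0 ∨ j = 1
          · simp [hA, h2, h]
          · simpa [hA, h2] using hoff i j h
        have h2 : y j - M ≤ 0 := sub_nonpos.2 (hyle j)
        exact mul_nonpos_of_nonneg_of_nonpos h1 h2
    have hSzero : ∑ j, A i j * (y j - M) = 0 := by
      refine le_antisymm (Finset.sum_nonpos (fun j _ => htermle j)) ?_
      rw [hS]
      exact neg_nonneg.2 (mul_nonpos_of_nonneg_of_nonpos hMpos.le hT)
    have hterm : ∀ j, A i j * (y j - M) = 0 := by
      have h0 : ∑ j, -(A i j * (y j - M)) = 0 := by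
        rw [Finset.sum_neg_distrib, hSzero, neg_zero]
      intro j
      have := (Finset.sum_eq_zero_iff_of_nonneg
        (fun j _ => neg_nonneg.2 (htermle j))).1 h0 j (Finset.mem_univ j)
      linarith
    have hT0 : ∑ j, A i j = 0 := by
      have h1 : -(M * ∑ j, A i j) = 0 := by rw [← hS, hSzero]
      have h2 : M * ∑ j, A i j = 0 := by linarith
      exact (mul_eq_zero.1 h2).resolve_left (ne_of_gt hMpos)
    have hQ01 : ∀ j, (j = 0 ∨ j = 1) → i ≠ j → Q i j = 0 := by
      intro j h1 h2
      have hall : ∀ j ∈ Finset.univ, Q i j - A i j = 0 := by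
        refine (Finset.sum_eq_zero_iff_of_nonneg (fun j _ => hq j)).1 ?_
        have := hDsum
        rw [hT0] at this
        linarith
      have := hall j (Finset.mem_univ j)
      rw [hAij_eq j h1 h2] at this
      linarith
    intro j hij hQpos
    have hj0 : j ≠ 0 := fun h => absurd (hQ01 j (Or.inl h) hij) (ne_of_gt hQpos)
    have hj1 : j ≠ 1 := fun h => absurd (hQ01 j (Or.inr h) hij) (ne_of_gt hQpos)
    have hAij : A i j = Q i j := by simp [hA, hj0, hj1]
    have := hterm j
    rw [hAij] at this
    have hyj : y j - M = 0 := (mul_eq_zero.1 this).resolve_left (ne_of_gt hQpos)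
    exact ⟨by linarith, hj0, hj1⟩
  have reach : ∀ j, Relation.TransGen (fun a b => a ≠ b ∧ 0 < Q a b) i0 j →
      y j = M ∧ j ≠ 0 ∧ j ≠ 1 := by
    intro j h
    induction h with
    | single h => exact key i0 hyi0 _ h.1 h.2
    | tail h1 h2 ih => exact key _ ih.1 _ h2.1 h2.2
  by_cases h : i0 = 0
  · have h01 : i0 ≠ (1 : Fin (s+2)) := by
      rw [h]; exact Fin.ne_of_val_ne (by simp)
    exact (reach 1 (hirr i0 1 h01)).2.2 rfl
  · exact (reach 0 (hirr i0 0 h)).2.1 rfl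
end
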